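/- For all r > 0 and μ > 0, the inequality (S_μ(r)/ζ(2μ+1))^{1/(μ+1)} + ζ(2μ+3)·S_μ(r)/(ζ(2μ+1)·S_{μ+1}(r)) ≥ 2 holds. -/

import Mathlib

open Real

set_option maxHeartbeats 1000000

noncomputable def mathieuS (μ r : ℝ) : ℝ :=
  ∑' n : ℕ, (2 * ((n : ℝ) + 1)) / ((((n : ℝ) + 1) ^ 2 + r ^ 2) ^ (μ + 1))

noncomputable def zetaR (s : ℝ) : ℝ := ∑' n : ℕ, ((n : ℝ) + 1) ^ (-s)

noncomputable def zTail (q : ℝ) : ℝ := ∑' n : ℕ, ((n : ℝ) + 2) ^ (-q)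
noncomputable def zTail2 (q : ℝ) : ℝ := ∑' n : ℕ, ((n : ℝ) + 3) ^ (-q)

-- Bernoulli: (1+x)^p ≥ 1 + p x for p ≥ 1, x ≥ 0
lemma bern_pos {x p : ℝ} (hx : 0 ≤ x) (hp : 1 ≤ p) : 1 + p * x ≤ (1 + x) ^ p := by
  have hp0 : 0 < p := lt_of_lt_of_le one_pos hp
  have ha : (0:ℝ) ≤ 1 + p * x := by positivity
  have hw1 : (0:ℝ) ≤ 1/p := by positivity
  have hw2 : (0:ℝ) ≤ 1 - 1/p := by
    have : 1/p ≤ 1 := by rw [div_le_one hp0]; exact hp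
    linarith
  have hgm := Real.geom_mean_le_arith_mean2_weighted hw1 hw2 ha zero_le_one
    (by field_simp; ring)
  rw [Real.one_rpow, mul_one] at hgm
  have hgm2 : (1 + p*x) ^ (1/p) ≤ 1 + x := by
    calc (1 + p*x) ^ (1/p) ≤ 1/p * (1+p*x) + (1-1/p)*1 := hgm
    _ = 1 + x := by field_simp; ring
  have := Real.rpow_le_rpow (Real.rpow_nonneg ha _) hgm2 (le_of_lt hp0)
  rwa [← Real.rpow_mul ha, one_div, inv_mul_cancel₀ (ne_of_gt hp0), Real.rpow_one] at this

-- Bernoulli: (1+y)^(-p) ≥ 1 - p y for p ≥ 0, y ≥ 0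
lemma bern_neg {y p : ℝ} (hy : 0 ≤ y) (hp : 0 ≤ p) : 1 - p * y ≤ (1 + y) ^ (-p) := by
  rcases le_or_gt (1 - p * y) 0 with h | h
  · exact le_trans h (le_of_lt (Real.rpow_pos_of_pos (by linarith) _))
  · have ha : (0:ℝ) ≤ 1 - p * y := le_of_lt h
    have hb : (0:ℝ) ≤ 1 + y := by linarith
    have hp1 : (0:ℝ) < p + 1 := by linarith
    have hw1 : (0:ℝ) ≤ 1/(p+1) := by positivity
    have hw2 : (0:ℝ) ≤ p/(p+1) := by positivity
    have hgm := Real.geom_mean_le_arith_mean2_weighted hw1 hw2 ha hb (by field_simp; ring)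
    have hgm2 : (1 - p*y) ^ (1/(p+1)) * (1+y) ^ (p/(p+1)) ≤ 1 := by
      calc (1 - p*y) ^ (1/(p+1)) * (1+y) ^ (p/(p+1))
          ≤ 1/(p+1) * (1-p*y) + p/(p+1) * (1+y) := hgm
        _ = 1 := by field_simp; ring
    have key : (1 - p*y) * (1+y) ^ p ≤ 1 := by
      have hnn : (0:ℝ) ≤ (1 - p*y) ^ (1/(p+1)) * (1+y) ^ (p/(p+1)) := by positivity
      have := Real.rpow_le_rpow hnn hgm2 (le_of_lt hp1)
      rw [Real.one_rpow, Real.mul_rpow (Real.rpow_nonneg ha _) (Real.rpow_nonneg hb _),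
        ← Real.rpow_mul ha, ← Real.rpow_mul hb] at this
      rw [div_mul_cancel₀ _ (ne_of_gt hp1), div_mul_cancel₀ _ (ne_of_gt hp1)] at this
      rwa [Real.rpow_one] at this
    rw [Real.rpow_neg hb, le_inv_comm₀ h (Real.rpow_pos_of_pos (by linarith : (0:ℝ) < 1+y) p)]
    rw [← one_div, le_div_iff₀ h]
    linarith [key]

-- summability of zeta-type series
lemma summable_zeta {q : ℝ} (hq : 1 < q) : Summable (fun n : ℕ => ((n : ℝ) + 1) ^ (-q)) := by
  have h : Summable (fun n : ℕ => (n : ℝ) ^ (-q)) := Real.summable_nat_rpow.2 (by linarith)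
  have h2 := (summable_nat_add_iff 1).2 h
  refine h2.congr fun n => ?_
  push_cast
  norm_num

lemma nu_pos (n : ℕ) : (0:ℝ) < (n:ℝ) + 1 := by positivity

-- the generic mathieu term bound : 2ν/(ν²+r²)^(μ+1) ≤ 2 ν^(-(2μ+1))
lemma mathieu_term_le {μ r : ℝ} (hμ : 0 < μ) (n : ℕ) :
    (2 * ((n : ℝ) + 1)) / ((((n : ℝ) + 1) ^ 2 + r ^ 2) ^ (μ + 1))
      ≤ 2 * ((n : ℝ) + 1) ^ (-(2*μ+1)) := by
  set ν : ℝ := (n:ℝ) + 1 with hν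
  have hν0 : 0 < ν := nu_pos n
  have hbase : (0:ℝ) < ν ^ 2 := by positivity
  have hmono : (ν ^ 2) ^ (μ+1) ≤ (ν ^ 2 + r ^ 2) ^ (μ+1) :=
    Real.rpow_le_rpow (le_of_lt hbase) (by nlinarith [sq_nonneg r]) (by linarith)
  have hpow : (ν ^ 2) ^ (μ+1) = ν ^ (2*(μ+1)) := by
    rw [← Real.rpow_natCast ν 2, ← Real.rpow_mul (le_of_lt hν0)]
    norm_num
  have h1 : (2 * ν) / ((ν ^ 2 + r ^ 2) ^ (μ + 1)) ≤ (2 * ν) / ((ν ^ 2) ^ (μ+1)) := by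
    apply div_le_div_of_nonneg_left (by positivity) (by positivity) hmono
  refine le_trans h1 (le_of_eq ?_)
  rw [hpow, mul_div_assoc]
  congr 1
  have hs : ν ^ ((1:ℝ) - 2*(μ+1)) = ν ^ (1:ℝ) / ν ^ (2*(μ+1)) := Real.rpow_sub hν0 1 _
  rw [Real.rpow_one] at hs
  rw [← hs]
  congr 1
  ring

lemma summable_mathieu {μ r : ℝ} (hμ : 0 < μ) :
    Summable (fun n : ℕ => (2 * ((n : ℝ) + 1)) / ((((n : ℝ) + 1) ^ 2 + r ^ 2) ^ (μ + 1))) := by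
  apply Summable.of_nonneg_of_le (fun n => by positivity) (fun n => mathieu_term_le hμ n)
  exact (summable_zeta (by linarith : (1:ℝ) < 2*μ+1)).mul_left 2

lemma summable_zTail {q : ℝ} (hq : 1 < q) : Summable (fun n : ℕ => ((n : ℝ) + 2) ^ (-q)) := by
  have h2 := (summable_nat_add_iff 1).2 (summable_zeta hq)
  refine h2.congr fun n => ?_
  push_cast; ring_nf

lemma zetaR_split {q : ℝ} (hq : 1 < q) : zetaR q = 1 + zTail q := by
  rw [zetaR, Summable.tsum_eq_zero_add (summable_zeta hq)]
  norm_num [Real.one_rpow]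
  rw [zTail]
  apply tsum_congr; intro n
  push_cast; ring_nf

lemma zTail_nonneg {q : ℝ} : 0 ≤ zTail q :=
  tsum_nonneg (fun n => Real.rpow_nonneg (by positivity) _)

lemma zetaR_ge_one {q : ℝ} (hq : 1 < q) : 1 ≤ zetaR q := by
  rw [zetaR_split hq]; linarith [zTail_nonneg (q := q)]

lemma zetaR_pos {q : ℝ} (hq : 1 < q) : 0 < zetaR q := lt_of_lt_of_le one_pos (zetaR_ge_one hq)

-- telescoping bound for sums
lemma tsum_le_of_telescope {f g : ℕ → ℝ} (hf : Summable f) (h0 : ∀ n, 0 ≤ f n)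
    (hg0 : ∀ n, 0 ≤ g n) (hle : ∀ n, f n ≤ g n - g (n+1)) : ∑' n, f n ≤ g 0 := by
  apply Summable.tsum_le_of_sum_le hf
  intro s
  obtain ⟨N, hN⟩ := s.exists_nat_subset_range
  calc ∑ i ∈ s, f i ≤ ∑ i ∈ Finset.range N, f i :=
        Finset.sum_le_sum_of_subset_of_nonneg hN (fun i _ _ => h0 i)
    _ ≤ ∑ i ∈ Finset.range N, (g i - g (i+1)) := Finset.sum_le_sum (fun i _ => hle i)
    _ = g 0 - g N := Finset.sum_range_sub' g N
    _ ≤ g 0 := by linarith [hg0 N]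

-- each tail term vs cube
lemma tail_term_le_cube {q : ℝ} (hq : 3 ≤ q) (c : ℝ) (hc : 2 ≤ c) :
    c ^ (-q) ≤ (c^3)⁻¹ := by
  have h1 : c ^ (-q) ≤ c ^ (-(3:ℝ)) :=
    Real.rpow_le_rpow_of_exponent_le (by linarith) (by linarith)
  have h2 : c ^ (-(3:ℝ)) = (c^3)⁻¹ := by
    rw [Real.rpow_neg (by linarith), ← Real.rpow_natCast c 3]; norm_num
  rw [← h2]; exact h1

lemma zTail_le_quarter {q : ℝ} (hq : 3 ≤ q) : zTail q ≤ 1/4 := by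
  have h : (1:ℝ)/4 = (fun n : ℕ => 1/(2*((n:ℝ)+1)*((n:ℝ)+2))) 0 := by norm_num
  rw [zTail, h]
  refine tsum_le_of_telescope (g := fun n : ℕ => 1/(2*((n:ℝ)+1)*((n:ℝ)+2)))
    (summable_zTail (by linarith))
    (fun n => Real.rpow_nonneg (by positivity) _) (fun n => by positivity) (fun n => ?_)
  have hc : (2:ℝ) ≤ (n:ℝ)+2 := by
    have : (0:ℝ) ≤ (n:ℝ) := Nat.cast_nonneg n
    linarith
  refine le_trans (tail_term_le_cube hq _ hc) ?_
  have hx : (0:ℝ) ≤ (n:ℝ) := Nat.cast_nonneg n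
  have key : ((((n:ℝ))+2)^3)⁻¹ ≤ 1/((((n:ℝ))+1)*(((n:ℝ))+2)*(((n:ℝ))+3)) := by
    rw [inv_eq_one_div, div_le_div_iff₀ (by positivity) (by positivity)]
    nlinarith
  refine le_trans key (le_of_eq ?_)
  have h1 : (0:ℝ) < ((n:ℝ)+1) := by linarith
  have h2 : (0:ℝ) < ((n:ℝ)+2) := by linarith
  have h3 : (0:ℝ) < ((n:ℝ)+3) := by linarith
  push_cast
  field_simp
  ring

lemma summable_zTail2 {q : ℝ} (hq : 1 < q) : Summable (fun n : ℕ => ((n : ℝ) + 3) ^ (-q)) := by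
  have h2 := (summable_nat_add_iff 1).2 (summable_zTail hq)
  refine h2.congr fun n => ?_
  push_cast; ring_nf
lemma zTail_split {q : ℝ} (hq : 1 < q) : zTail q = (2:ℝ)^(-q) + zTail2 q := by
  rw [zTail, Summable.tsum_eq_zero_add (summable_zTail hq)]
  norm_num
  rw [zTail2]
  apply tsum_congr; intro n
  push_cast; ring_nf

-- cube telescope starting at 3 : ∑ 1/((n+2)(n+3)(n+4)) = 1/12
lemma zTail2_tele {q : ℝ} (hq : 3 ≤ q) (c : ℝ) (hc : 0 < c) (hcb : ∀ n : ℕ, ((n:ℝ)+3)^(-q) ≤ c * (((n:ℝ)+2)*((n:ℝ)+3)*((n:ℝ)+4))⁻¹) :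
    zTail2 q ≤ c/12 := by
  have h : c/12 = (fun n : ℕ => c * (2*((n:ℝ)+2)*((n:ℝ)+3))⁻¹) 0 := by norm_num; ring
  rw [zTail2, h]
  refine tsum_le_of_telescope (g := fun n : ℕ => c * (2*((n:ℝ)+2)*((n:ℝ)+3))⁻¹)
    (summable_zTail2 (by linarith))
    (fun n => Real.rpow_nonneg (by positivity) _) (fun n => by positivity) (fun n => ?_)
  refine le_trans (hcb n) ?_
  rw [← mul_sub]
  apply mul_le_mul_of_nonneg_left _ (le_of_lt hc)
  have h1 : (0:ℝ) < ((n:ℝ)+2) := by positivity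
  have h2 : (0:ℝ) < ((n:ℝ)+3) := by positivity
  have h3 : (0:ℝ) < ((n:ℝ)+4) := by positivity
  rw [inv_le_iff_one_le_mul₀ (by positivity)]
  have expand : (((2:ℝ)*((n:ℝ)+2)*((n:ℝ)+3))⁻¹ - (2*(((n:ℝ)+1)+2)*(((n:ℝ)+1)+3))⁻¹)
      = (((n:ℝ)+2)*((n:ℝ)+3)*((n:ℝ)+4))⁻¹ := by
    rw [inv_sub_inv (by positivity) (by positivity)]
    rw [div_eq_iff (by positivity)]
    field_simp
    ring
  push_cast
  push_cast at expand
  rw [expand]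
  rw [inv_mul_cancel₀ (by positivity)]

lemma rpow_neg_nat (x:ℝ) (hx : 0 < x) (k : ℕ) : x ^ (-(k:ℝ)) = (x^k)⁻¹ := by
  rw [Real.rpow_neg (le_of_lt hx), Real.rpow_natCast]

lemma rpow_base_antitone {a b c : ℝ} (ha : 0 < a) (hab : a ≤ b) (hc : 0 ≤ c) :
    b ^ (-c) ≤ a ^ (-c) := by
  rw [Real.rpow_neg (le_of_lt ha), Real.rpow_neg (by linarith)]
  apply inv_anti₀ (Real.rpow_pos_of_pos ha c)
  exact Real.rpow_le_rpow (le_of_lt ha) hab hc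

lemma zTail_le_13_144 {q : ℝ} (hq : 4 ≤ q) : zTail q ≤ 13/144 := by
  rw [zTail_split (by linarith)]
  have h1 : (2:ℝ)^(-q) ≤ 1/16 := by
    have := Real.rpow_le_rpow_of_exponent_le (by norm_num : (1:ℝ) ≤ 2) (by linarith : -q ≤ -(4:ℝ))
    have h4 := rpow_neg_nat 2 (by norm_num) 4
    norm_num at h4 this
    linarith
  have h2 : zTail2 q ≤ (1/3)/12 := by
    apply zTail2_tele (by linarith) _ (by norm_num)
    intro n
    have hb : (0:ℝ) < (n:ℝ)+3 := by positivity
    have step1 : ((n:ℝ)+3)^(-q) ≤ ((n:ℝ)+3)^(-(4:ℝ)) :=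
      Real.rpow_le_rpow_of_exponent_le (by linarith [Nat.cast_nonneg (α := ℝ) n]) (by linarith)
    have step2 : ((n:ℝ)+3)^(-(4:ℝ)) = (((n:ℝ)+3)^(4:ℕ))⁻¹ := by
      rw [Real.rpow_neg (le_of_lt hb), ← Real.rpow_natCast ((n:ℝ)+3) 4]
      norm_num
    have step3 : (((n:ℝ)+3)^(4:ℕ))⁻¹ ≤ 1/3 * ((((n:ℝ))+2)*(((n:ℝ))+3)*(((n:ℝ))+4))⁻¹ := by
      rw [one_div, ← mul_inv, inv_le_inv₀ (by positivity) (by positivity)]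
      have hpos : (0:ℝ) ≤ ((n:ℝ)+3)^2*(n:ℝ) := by positivity
      nlinarith [Nat.cast_nonneg (α := ℝ) n, hpos]
    calc ((n:ℝ)+3)^(-q) ≤ (((n:ℝ)+3)^(4:ℕ))⁻¹ := step2 ▸ step1
      _ ≤ 1/3 * ((((n:ℝ))+2)*(((n:ℝ))+3)*(((n:ℝ))+4))⁻¹ := step3
  norm_num at h1 h2 ⊢
  linarith

lemma zTail_le_pow {q : ℝ} (hq : 5 ≤ q) : zTail q ≤ (4/3) * (2:ℝ)^(-q) := by
  rw [zTail_split (by linarith)]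
  have key : zTail2 q ≤ (3:ℝ)^((3:ℝ)-q)/12 := by
    apply zTail2_tele (by linarith)
    · exact Real.rpow_pos_of_pos (by norm_num) _
    intro n
    have hb : (0:ℝ) < (n:ℝ)+3 := by positivity
    have split : ((n:ℝ)+3)^(-q) = ((n:ℝ)+3)^(-(3:ℝ)) * ((n:ℝ)+3)^(-(q-3)) := by
      rw [← Real.rpow_add hb]; ring_nf
    have e1 : ((n:ℝ)+3)^(-(3:ℝ)) = (((n:ℝ)+3)^(3:ℕ))⁻¹ := by
      rw [Real.rpow_neg (le_of_lt hb), ← Real.rpow_natCast ((n:ℝ)+3) 3]; norm_num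
    have e2 : ((n:ℝ)+3)^(-(q-3)) ≤ (3:ℝ)^(-(q-3)) :=
      rpow_base_antitone (by norm_num) (by linarith [Nat.cast_nonneg (α := ℝ) n]) (by linarith)
    have e3 : (((n:ℝ)+3)^(3:ℕ))⁻¹ ≤ ((((n:ℝ))+2)*(((n:ℝ))+3)*(((n:ℝ))+4))⁻¹ := by
      rw [inv_le_inv₀ (by positivity) (by positivity)]
      nlinarith [Nat.cast_nonneg (α := ℝ) n]
    have e4 : (3:ℝ)^(-(q-3)) = (3:ℝ)^((3:ℝ)-q) := by ring_nf
    calc ((n:ℝ)+3)^(-q) = ((n:ℝ)+3)^(-(3:ℝ)) * ((n:ℝ)+3)^(-(q-3)) := split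
      _ ≤ (((n:ℝ)+3)^(3:ℕ))⁻¹ * (3:ℝ)^(-(q-3)) := by
          rw [e1]
          exact mul_le_mul_of_nonneg_left e2 (by positivity)
      _ ≤ ((((n:ℝ))+2)*(((n:ℝ))+3)*(((n:ℝ))+4))⁻¹ * (3:ℝ)^((3:ℝ)-q) := by
          rw [← e4]
          exact mul_le_mul_of_nonneg_right e3 (Real.rpow_nonneg (by norm_num) _)
      _ = (3:ℝ)^((3:ℝ)-q) * ((((n:ℝ))+2)*(((n:ℝ))+3)*(((n:ℝ))+4))⁻¹ := by ring
  -- now  3^(3-q)/12 ≤ (1/3) 2^(-q)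
  have cmp : (3:ℝ)^((3:ℝ)-q)/12 ≤ (1/3) * (2:ℝ)^(-q) := by
    have h32 : (243:ℝ)/32 ≤ (3/2:ℝ)^q := by
      have := Real.rpow_le_rpow_of_exponent_le (by norm_num : (1:ℝ) ≤ 3/2) hq
      have e5 : ((3:ℝ)/2)^((5:ℕ):ℝ) = 243/32 := by
        rw [Real.rpow_natCast]; norm_num
      norm_num at e5 this
      linarith
    have hdiv : ((3:ℝ)/2)^q = (3:ℝ)^q / (2:ℝ)^q := Real.div_rpow (by norm_num) (by norm_num) q
    have h2q : (0:ℝ) < (2:ℝ)^q := Real.rpow_pos_of_pos (by norm_num) q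
    have h3q : (0:ℝ) < (3:ℝ)^q := Real.rpow_pos_of_pos (by norm_num) q
    have hmain : (243/32:ℝ) * (2:ℝ)^q ≤ (3:ℝ)^q := by
      rw [hdiv] at h32
      exact (le_div_iff₀ h2q).1 h32
    have e6 : (3:ℝ)^((3:ℝ)-q) = 27 * ((3:ℝ)^q)⁻¹ := by
      rw [Real.rpow_sub (by norm_num : (0:ℝ) < 3)]
      have e8 : (3:ℝ)^(3:ℝ) = 27 := by
        rw [show (3:ℝ) = ((3:ℕ):ℝ) by norm_num, Real.rpow_natCast]
        norm_num
      rw [e8, div_eq_mul_inv]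
    have e7 : (2:ℝ)^(-q) = ((2:ℝ)^q)⁻¹ := Real.rpow_neg (by norm_num) q
    rw [e6, e7]
    rw [div_le_iff₀ (by norm_num : (0:ℝ) < 12)]
    have h3qinv : ((3:ℝ)^q)⁻¹ ≤ ((243/32:ℝ) * (2:ℝ)^q)⁻¹ := by
      apply inv_anti₀ (by positivity) hmain
    calc 27 * ((3:ℝ)^q)⁻¹ ≤ 27 * ((243/32:ℝ) * (2:ℝ)^q)⁻¹ := by
          exact mul_le_mul_of_nonneg_left h3qinv (by norm_num)
      _ = (32*27/243) * ((2:ℝ)^q)⁻¹ := by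
          rw [mul_inv]; ring
      _ ≤ 1/3 * ((2:ℝ)^q)⁻¹ * 12 := by
          rw [div_mul_eq_mul_div, mul_comm]
          nlinarith [inv_nonneg.2 (le_of_lt h2q)]
  linarith [key, cmp]

-- exp/log numeric facts
lemma exp_two_lt : Real.exp 2 < 7.39 := by
  have h := Real.exp_one_lt_d9
  have h2 : Real.exp 2 = Real.exp 1 ^ 2 := by
    rw [← Real.exp_nat_mul]; norm_num
  rw [h2]
  nlinarith [Real.exp_pos 1]

lemma exp_twofifth_le : Real.exp (2/5) ≤ 8/5 := by
  have key : Real.exp (2/5) ^ (5:ℕ) ≤ (8/5:ℝ)^(5:ℕ) := by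
    have h1 : Real.exp (2/5) ^ (5:ℕ) = Real.exp 2 := by
      rw [← Real.exp_nat_mul]; norm_num
    rw [h1]
    nlinarith [exp_two_lt]
  exact le_of_pow_le_pow_left₀ (by norm_num) (by norm_num) key

lemma log_85 : (2/5:ℝ) ≤ Real.log (8/5) :=
  (Real.le_log_iff_exp_le (by norm_num)).2 exp_twofifth_le

lemma exp_twothird_le : Real.exp (2/3) ≤ 2 := by
  have key : Real.exp (2/3) ^ (3:ℕ) ≤ (2:ℝ)^(3:ℕ) := by
    have h1 : Real.exp (2/3) ^ (3:ℕ) = Real.exp 2 := by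
      rw [← Real.exp_nat_mul]; norm_num
    rw [h1]
    nlinarith [exp_two_lt]
  exact le_of_pow_le_pow_left₀ (by norm_num) (by norm_num) key

lemma log_two_ge : (2/3:ℝ) ≤ Real.log 2 :=
  (Real.le_log_iff_exp_le (by norm_num)).2 exp_twothird_le

-- c^γ ≥ 1 + γ t when log c ≥ t ≥ 0, γ ≥ 0, c > 0
lemma rpow_lb {c t γ : ℝ} (hc : 0 < c) (hlog : t ≤ Real.log c) (hγ : 0 ≤ γ) :
    1 + γ * t ≤ c ^ γ := by
  rw [Real.rpow_def_of_pos hc]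
  calc 1 + γ * t ≤ 1 + γ * Real.log c := by nlinarith
    _ ≤ Real.exp (γ * Real.log c) := by linarith [Real.add_one_le_exp (γ * Real.log c)]
    _ = Real.exp (Real.log c * γ) := by rw [mul_comm]

lemma twopow_growth {p : ℝ} (hp : 0 ≤ p) : 1 + p * (2/3) ≤ (2:ℝ) ^ p := by
  have := rpow_lb (by norm_num : (0:ℝ) < 2) log_two_ge hp
  linarith [this]

/-- Chebyshev-type correlation inequality for the Mathieu series. -/
lemma cheb (hμ : 0 < μ) (hr : 0 < r) :
    zetaR (2*μ+1) * mathieuS (μ+1) r ≤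
      mathieuS μ r * ∑' n : ℕ, ((n:ℝ)+1) ^ (-(2*μ+1)) * ((((n:ℝ)+1)^2 + r^2)⁻¹) := by
  classical
  set q : ℕ → ℝ := fun n => ((n:ℝ)+1)^2 + r^2 with hqdef
  have hq0 : ∀ n, 0 < q n := fun n => by positivity
  set w : ℕ → ℝ := fun n => ((n:ℝ)+1) ^ (-(2*μ+1)) with hwdef
  set a : ℕ → ℝ := fun n => (2 * ((n : ℝ) + 1)) / ((q n) ^ (μ + 1)) with hadef
  have hw0 : ∀ n, 0 ≤ w n := fun n => Real.rpow_nonneg (by positivity) _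
  have ha0 : ∀ n, 0 ≤ a n := fun n => by
    have := hq0 n; positivity
  have hau : mathieuS (μ+1) r = ∑' n, a n * (q n)⁻¹ := by
    rw [mathieuS]
    apply tsum_congr; intro n
    rw [hadef]
    have : (q n) ^ (μ + 1 + 1) = (q n) ^ (μ+1) * q n := by
      rw [Real.rpow_add (hq0 n), Real.rpow_one]
    simp only [hqdef] at this ⊢
    rw [this, div_mul_eq_div_div, div_eq_mul_inv _ ((((n:ℝ)+1)^2 + r^2))]
  have Sw : Summable w := summable_zeta (by linarith)
  have Sa : Summable a := summable_mathieu hμ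
  have hui : ∀ n, (q n)⁻¹ ≤ 1 := fun n => by
    rw [inv_le_one_iff₀]
    right
    have h0 : (0:ℝ) ≤ (n:ℝ) := Nat.cast_nonneg n
    have h1 : (1:ℝ) ≤ ((n:ℝ)+1)^2 := by nlinarith
    have : q n = ((n:ℝ)+1)^2 + r^2 := rfl
    nlinarith [sq_nonneg r]
  have hu0 : ∀ n, 0 ≤ (q n)⁻¹ := fun n => inv_nonneg.2 (le_of_lt (hq0 n))
  have Sau : Summable (fun n => a n * (q n)⁻¹) := by
    apply Summable.of_nonneg_of_le (fun n => mul_nonneg (ha0 n) (hu0 n))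
      (fun n => ?_) Sa
    calc a n * (q n)⁻¹ ≤ a n * 1 := mul_le_mul_of_nonneg_left (hui n) (ha0 n)
      _ = a n := mul_one _
  have Swu : Summable (fun n => w n * (q n)⁻¹) := by
    apply Summable.of_nonneg_of_le (fun n => mul_nonneg (hw0 n) (hu0 n))
      (fun n => ?_) Sw
    calc w n * (q n)⁻¹ ≤ w n * 1 := mul_le_mul_of_nonneg_left (hui n) (hw0 n)
      _ = w n := mul_one _
  -- key monotonicity : i ≤ j → w j * a i ≤ w i * a j
  have key : ∀ i j : ℕ, i ≤ j → w j * a i ≤ w i * a j := by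
    intro i j hij
    have hνi : (0:ℝ) < (i:ℝ)+1 := nu_pos i
    have hνj : (0:ℝ) < (j:ℝ)+1 := nu_pos j
    have hνij : (i:ℝ)+1 ≤ (j:ℝ)+1 := by
      have : (i:ℝ) ≤ (j:ℝ) := Nat.cast_le.2 hij
      linarith
    have hwi : w i = (((i:ℝ)+1) ^ (2*μ+1))⁻¹ := by
      rw [hwdef]; exact Real.rpow_neg (le_of_lt hνi) _
    have hwj : w j = (((j:ℝ)+1) ^ (2*μ+1))⁻¹ := by
      rw [hwdef]; exact Real.rpow_neg (le_of_lt hνj) _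
    rw [hadef, hwi, hwj]
    simp only
    rw [inv_mul_eq_div, inv_mul_eq_div, div_div, div_div,
      div_le_div_iff₀ (by positivity) (by positivity)]
    -- goal : 2 (ν i) * ((ν i)^{2μ+1} (q j)^{μ+1}) ≤ 2 (ν j) * ((ν j)^{2μ+1} (q i)^{μ+1})
    have collect : ∀ k m : ℕ, ((k:ℝ)+1) * (((k:ℝ)+1) ^ (2*μ+1) * (q m) ^ (μ+1))
        = ((((k:ℝ)+1)^2 * q m) ^ (μ+1)) := by
      intro k m
      have hνk : (0:ℝ) < (k:ℝ)+1 := nu_pos k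
      have e1 : ((k:ℝ)+1) * (((k:ℝ)+1) ^ (2*μ+1)) = ((k:ℝ)+1) ^ (2*(μ+1)) := by
        nth_rewrite 1 [← Real.rpow_one ((k:ℝ)+1)]
        rw [← Real.rpow_add hνk]; ring_nf
      have e2 : (((k:ℝ)+1)^2) ^ (μ+1) = ((k:ℝ)+1) ^ (2*(μ+1)) := by
        rw [← Real.rpow_natCast ((k:ℝ)+1) 2, ← Real.rpow_mul (le_of_lt hνk)]; norm_num
      rw [← mul_assoc, e1, ← e2, ← Real.mul_rpow (by positivity) (le_of_lt (hq0 m))]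
    have lhs_eq : 2 * ((i:ℝ)+1) * (q j ^ (μ+1) * ((i:ℝ)+1) ^ (2*μ+1))
        = 2 * ((((i:ℝ)+1)^2 * q j) ^ (μ+1)) := by rw [← collect i j]; ring
    have rhs_eq : 2 * ((j:ℝ)+1) * (q i ^ (μ+1) * ((j:ℝ)+1) ^ (2*μ+1))
        = 2 * ((((j:ℝ)+1)^2 * q i) ^ (μ+1)) := by rw [← collect j i]; ring
    rw [lhs_eq, rhs_eq]
    apply mul_le_mul_of_nonneg_left _ (by norm_num : (0:ℝ) ≤ 2)
    apply Real.rpow_le_rpow (by positivity) _ (by linarith)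
    rw [hqdef]
    simp only
    have hsq : ((i:ℝ)+1)^2 ≤ ((j:ℝ)+1)^2 := by nlinarith
    nlinarith [mul_le_mul_of_nonneg_right hsq (sq_nonneg r)]
  -- pointwise rearrangement on pairs
  have point : ∀ p : ℕ × ℕ, w p.1 * (a p.2 * (q p.2)⁻¹) + w p.2 * (a p.1 * (q p.1)⁻¹)
      ≤ w p.1 * (q p.1)⁻¹ * a p.2 + w p.2 * (q p.2)⁻¹ * a p.1 := by
    rintro ⟨i, j⟩
    simp only
    rcases le_total i j with hij | hij
    · have hq : (q j)⁻¹ ≤ (q i)⁻¹ := by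
        apply inv_anti₀ (hq0 i)
        rw [hqdef]
        simp only
        have : (i:ℝ) ≤ (j:ℝ) := Nat.cast_le.2 hij
        nlinarith
      have hk := key i j hij
      nlinarith [mul_nonneg (hw0 i) (ha0 j), mul_nonneg (hw0 j) (ha0 i)]
    · have hq : (q i)⁻¹ ≤ (q j)⁻¹ := by
        apply inv_anti₀ (hq0 j)
        rw [hqdef]
        simp only
        have : (j:ℝ) ≤ (i:ℝ) := Nat.cast_le.2 hij
        nlinarith
      have hk := key j i hij
      nlinarith [mul_nonneg (hw0 j) (ha0 i), mul_nonneg (hw0 i) (ha0 j)]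
  -- product summabilities
  have SF : Summable (fun p : ℕ × ℕ => w p.1 * (a p.2 * (q p.2)⁻¹)) :=
    Sw.mul_of_nonneg Sau hw0 (fun n => mul_nonneg (ha0 n) (hu0 n))
  have SG : Summable (fun p : ℕ × ℕ => (w p.1 * (q p.1)⁻¹) * a p.2) :=
    Swu.mul_of_nonneg Sa (fun n => mul_nonneg (hw0 n) (hu0 n)) ha0
  have SFs : Summable (fun p : ℕ × ℕ => w p.2 * (a p.1 * (q p.1)⁻¹)) := by
    have := (Equiv.prodComm ℕ ℕ).summable_iff.2 SF
    simpa [Function.comp_def] using this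
  have SGs : Summable (fun p : ℕ × ℕ => (w p.2 * (q p.2)⁻¹) * a p.1) := by
    have := (Equiv.prodComm ℕ ℕ).summable_iff.2 SG
    simpa [Function.comp_def] using this
  -- tsum products
  have TF : zetaR (2*μ+1) * mathieuS (μ+1) r = ∑' p : ℕ × ℕ, w p.1 * (a p.2 * (q p.2)⁻¹) := by
    rw [hau, zetaR]
    exact Summable.tsum_mul_tsum Sw Sau SF
  have TG : mathieuS μ r * (∑' n : ℕ, ((n:ℝ)+1) ^ (-(2*μ+1)) * ((((n:ℝ)+1)^2 + r^2)⁻¹))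
      = ∑' p : ℕ × ℕ, (w p.2 * (q p.2)⁻¹) * a p.1 := by
    have hX : mathieuS μ r = ∑' n, a n := by rw [mathieuS]
    rw [hX]
    have : (∑' n : ℕ, ((n:ℝ)+1) ^ (-(2*μ+1)) * ((((n:ℝ)+1)^2 + r^2)⁻¹))
        = ∑' n, w n * (q n)⁻¹ := by apply tsum_congr; intro n; rfl
    rw [this, mul_comm]
    rw [Summable.tsum_mul_tsum Swu Sa SG]
    have h := (Equiv.prodComm ℕ ℕ).tsum_eq (fun p : ℕ × ℕ => (w p.1 * (q p.1)⁻¹) * a p.2)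
    simp only [Equiv.prodComm_apply, Prod.fst_swap, Prod.snd_swap] at h
    rw [h]
  rw [TF, TG]
  -- symmetrize
  have sym : ∑' p : ℕ × ℕ, w p.1 * (a p.2 * (q p.2)⁻¹)
      = (1/2) * ∑' p : ℕ × ℕ, (w p.1 * (a p.2 * (q p.2)⁻¹) + w p.2 * (a p.1 * (q p.1)⁻¹)) := by
    rw [Summable.tsum_add SF SFs]
    have h := (Equiv.prodComm ℕ ℕ).tsum_eq (fun p : ℕ × ℕ => w p.1 * (a p.2 * (q p.2)⁻¹))
    simp only [Equiv.prodComm_apply, Prod.fst_swap, Prod.snd_swap] at h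
    rw [h]; ring
  have symG : ∑' p : ℕ × ℕ, (w p.2 * (q p.2)⁻¹) * a p.1
      = (1/2) * ∑' p : ℕ × ℕ, ((w p.1 * (q p.1)⁻¹) * a p.2 + (w p.2 * (q p.2)⁻¹) * a p.1) := by
    rw [Summable.tsum_add SG SGs]
    have h := (Equiv.prodComm ℕ ℕ).tsum_eq (fun p : ℕ × ℕ => (w p.1 * (q p.1)⁻¹) * a p.2)
    simp only [Equiv.prodComm_apply, Prod.fst_swap, Prod.snd_swap] at h
    rw [h]; ring
  rw [sym, symG]
  apply mul_le_mul_of_nonneg_left _ (by norm_num : (0:ℝ) ≤ 1/2)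
  exact Summable.tsum_le_tsum point (SF.add SFs) (SG.add SGs)


-- T bound : ∑ w_n u_n ≤ 1/(1+r²) + zTail(2μ+3)
lemma Tbound {μ r : ℝ} (hμ : 0 < μ) (hr : 0 < r) :
    ∑' n : ℕ, ((n:ℝ)+1) ^ (-(2*μ+1)) * ((((n:ℝ)+1)^2 + r^2)⁻¹)
      ≤ (1+r^2)⁻¹ + zTail (2*μ+3) := by
  have hu0 : ∀ n : ℕ, (0:ℝ) ≤ ((((n:ℝ)+1)^2 + r^2)⁻¹) := fun n => by positivity
  have hterm : ∀ n : ℕ, ((n:ℝ)+1) ^ (-(2*μ+1)) * ((((n:ℝ)+1)^2 + r^2)⁻¹)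
      ≤ ((n:ℝ)+1) ^ (-(2*μ+1)) := by
    intro n
    have h1 : ((((n:ℝ)+1)^2 + r^2)⁻¹) ≤ 1 := by
      rw [inv_le_one_iff₀]; right
      have h0 : (0:ℝ) ≤ (n:ℝ) := Nat.cast_nonneg n
      nlinarith [sq_nonneg r]
    calc ((n:ℝ)+1) ^ (-(2*μ+1)) * ((((n:ℝ)+1)^2 + r^2)⁻¹)
        ≤ ((n:ℝ)+1) ^ (-(2*μ+1)) * 1 :=
          mul_le_mul_of_nonneg_left h1 (Real.rpow_nonneg (by positivity) _)
      _ = ((n:ℝ)+1) ^ (-(2*μ+1)) := mul_one _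
  have Swu : Summable (fun n : ℕ => ((n:ℝ)+1) ^ (-(2*μ+1)) * ((((n:ℝ)+1)^2 + r^2)⁻¹)) :=
    Summable.of_nonneg_of_le (fun n => mul_nonneg (Real.rpow_nonneg (by positivity) _) (hu0 n))
      hterm (summable_zeta (by linarith))
  rw [Summable.tsum_eq_zero_add Swu]
  have hfirst : (((0:ℕ):ℝ)+1) ^ (-(2*μ+1)) * (((((0:ℕ):ℝ)+1)^2 + r^2)⁻¹) = (1+r^2)⁻¹ := by
    norm_num [Real.one_rpow]
  rw [hfirst]
  apply add_le_add_right
  have hshift : ∀ n : ℕ, ((((n+1:ℕ)):ℝ)+1) ^ (-(2*μ+1)) * (((((n+1:ℕ)):ℝ)+1)^2 + r^2)⁻¹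
      ≤ ((n:ℝ)+2) ^ (-(2*μ+3)) := by
    intro n
    have hc : ((n+1:ℕ):ℝ)+1 = (n:ℝ)+2 := by push_cast; ring
    rw [hc]
    have hν : (0:ℝ) < (n:ℝ)+2 := by positivity
    have h2 : (((n:ℝ)+2)^2 + r^2)⁻¹ ≤ ((n:ℝ)+2) ^ (-(2:ℝ)) := by
      have e1 : ((n:ℝ)+2) ^ (-(2:ℝ)) = (((n:ℝ)+2)^(2:ℕ))⁻¹ := by
        rw [Real.rpow_neg (le_of_lt hν)]
        norm_cast
      rw [e1]
      apply inv_anti₀ (by positivity)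
      nlinarith [sq_nonneg r]
    calc ((n:ℝ)+2) ^ (-(2*μ+1)) * (((n:ℝ)+2)^2 + r^2)⁻¹
        ≤ ((n:ℝ)+2) ^ (-(2*μ+1)) * ((n:ℝ)+2) ^ (-(2:ℝ)) :=
          mul_le_mul_of_nonneg_left h2 (Real.rpow_nonneg (le_of_lt hν) _)
      _ = ((n:ℝ)+2) ^ (-(2*μ+3)) := by
          rw [← Real.rpow_add hν]; ring_nf
  rw [zTail]
  apply Summable.tsum_le_tsum hshift ((summable_nat_add_iff 1).2 Swu) (summable_zTail (by linarith))

-- first-term bound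
lemma first_term {μ r : ℝ} (hμ : 0 < μ) (hr : 0 < r) :
    2 / (1+r^2) ^ (μ+1) ≤ mathieuS μ r := by
  have Sa : Summable (fun n : ℕ => (2 * ((n : ℝ) + 1)) / ((((n : ℝ) + 1) ^ 2 + r ^ 2) ^ (μ + 1))) :=
    summable_mathieu hμ
  have h := Summable.le_tsum Sa 0 (fun j _ => by positivity)
  rw [mathieuS]
  refine le_trans (le_of_eq ?_) h
  norm_num

-- A3 : if (μ+1) r² ≤ 3 then  mathieuS μ r ≥ 2 zetaR(2μ+1)/(1+r²)^(μ+1)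
lemma A3 {μ r : ℝ} (hμ : 0 < μ) (hr : 0 < r) (hx3 : (μ+1)*r^2 ≤ 3) :
    2 * zetaR (2*μ+1) / (1+r^2) ^ (μ+1) ≤ mathieuS μ r := by
  set x := (μ+1)*r^2 with hxdef
  have hx0 : 0 ≤ x := by positivity
  -- tail terms bound
  have tail_bd : ∀ n : ℕ, (1 - x/4) * (2 * ((n:ℝ)+2) ^ (-(2*μ+1)))
      ≤ (2 * (((n+1:ℕ):ℝ) + 1)) / (((((n+1:ℕ):ℝ) + 1) ^ 2 + r ^ 2) ^ (μ + 1)) := by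
    intro n
    have hc : ((n+1:ℕ):ℝ)+1 = (n:ℝ)+2 := by push_cast; ring
    rw [hc]
    set ν : ℝ := (n:ℝ)+2 with hνdef
    have hν : (0:ℝ) < ν := by positivity
    have hν2 : (2:ℝ) ≤ ν := by
      have : (0:ℝ) ≤ (n:ℝ) := Nat.cast_nonneg n
      simp only [hνdef]; linarith
    set y : ℝ := r^2/ν^2 with hydef
    have hy : 0 ≤ y := by positivity
    have split : ν^2 + r^2 = ν^2 * (1+y) := by
      rw [hydef, mul_add, mul_one, mul_div_assoc', mul_comm (ν^2) (r^2), mul_div_assoc, div_self (by positivity), mul_one]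
    have e2 : (ν^2*(1+y)) ^ (μ+1) = (ν^2) ^ (μ+1) * (1+y) ^ (μ+1) :=
      Real.mul_rpow (by positivity) (by positivity)
    have e3 : (ν ^ 2) ^ (μ+1) = ν ^ (2*(μ+1)) := by
      rw [← Real.rpow_natCast ν 2, ← Real.rpow_mul (le_of_lt hν)]; norm_num
    have e4 : 2 * ν / ((ν^2) ^ (μ+1)) = 2 * ν ^ (-(2*μ+1)) := by
      rw [e3, mul_div_assoc]
      congr 1
      have hs : ν ^ ((1:ℝ) - 2*(μ+1)) = ν ^ (1:ℝ) / ν ^ (2*(μ+1)) := Real.rpow_sub hν 1 _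
      rw [Real.rpow_one] at hs
      rw [← hs]; congr 1; ring
    have hyle : (μ+1) * y ≤ x/4 := by
      rw [hydef, hxdef, mul_div_assoc]
      apply mul_le_mul_of_nonneg_left _ (by linarith : (0:ℝ) ≤ μ+1)
      apply div_le_div_of_nonneg_left (sq_nonneg r) (by norm_num) (by nlinarith)
    have hbern : 1 - x/4 ≤ (1+y) ^ (-(μ+1)) := by
      calc 1 - x/4 ≤ 1 - (μ+1)*y := by linarith
        _ ≤ (1+y) ^ (-(μ+1)) := bern_neg hy (by linarith)
    calc (1 - x/4) * (2 * ν ^ (-(2*μ+1)))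
        ≤ ((1+y) ^ (-(μ+1))) * (2 * ν ^ (-(2*μ+1))) := by
          apply mul_le_mul_of_nonneg_right hbern (by positivity)
      _ = (2 * ν) / ((ν^2 + r^2) ^ (μ+1)) := by
          rw [split, e2, ← e4]
          rw [Real.rpow_neg (by positivity : (0:ℝ) ≤ 1+y)]
          field_simp
  -- sum it up
  have Sa := summable_mathieu (μ := μ) (r := r) hμ
  have Stail : Summable (fun n : ℕ => (1 - x/4) * (2 * ((n:ℝ)+2) ^ (-(2*μ+1)))) :=
    ((summable_zTail (by linarith : (1:ℝ) < 2*μ+1)).mul_left 2).mul_left _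
  have hsum : (1 - x/4) * (2 * zTail (2*μ+1))
      ≤ ∑' n : ℕ, (2 * (((n+1:ℕ):ℝ) + 1)) / (((((n+1:ℕ):ℝ) + 1) ^ 2 + r ^ 2) ^ (μ + 1)) := by
    have := Summable.tsum_le_tsum tail_bd Stail ((summable_nat_add_iff 1).2 Sa)
    calc (1 - x/4) * (2 * zTail (2*μ+1))
        = ∑' n : ℕ, (1 - x/4) * (2 * ((n:ℝ)+2) ^ (-(2*μ+1))) := by
          rw [zTail, tsum_mul_left, tsum_mul_left]
      _ ≤ _ := this
  have hsplit := Summable.tsum_eq_zero_add Sa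
  have hfirst : (2 * (((0:ℕ):ℝ) + 1)) / (((((0:ℕ):ℝ) + 1) ^ 2 + r ^ 2) ^ (μ + 1))
      = 2 / (1+r^2) ^ (μ+1) := by norm_num
  -- combine
  have hX : 2 / (1+r^2) ^ (μ+1) + (1 - x/4) * (2 * zTail (2*μ+1)) ≤ mathieuS μ r := by
    rw [mathieuS, hsplit, hfirst]
    exact add_le_add_right hsum _
  -- now show 2 z1 / s^{μ+1} ≤ LHS
  have hP : (0:ℝ) < (1+r^2) ^ (μ+1) := Real.rpow_pos_of_pos (by positivity) _
  have hPx : 1 + x ≤ (1+r^2) ^ (μ+1) := by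
    have hb := bern_pos (sq_nonneg r) (by linarith : (1:ℝ) ≤ μ+1)
    rw [hxdef]
    exact hb
  have hinv : ((1+r^2) ^ (μ+1))⁻¹ ≤ 1 - x/4 := by
    have h1 : (1+x) * (1 - x/4) ≥ 1 := by nlinarith
    have h2 : ((1+r^2) ^ (μ+1))⁻¹ ≤ (1+x)⁻¹ := by
      apply inv_anti₀ (by positivity) hPx
    have h3 : (1+x)⁻¹ ≤ 1 - x/4 := by
      rw [inv_le_iff_one_le_mul₀ (by positivity)]
      nlinarith
    linarith
  have hz1 : zetaR (2*μ+1) = 1 + zTail (2*μ+1) := zetaR_split (by linarith)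
  have ht0 : 0 ≤ zTail (2*μ+1) := zTail_nonneg
  calc 2 * zetaR (2*μ+1) / (1+r^2) ^ (μ+1)
      = 2 / (1+r^2) ^ (μ+1) + (2 * zTail (2*μ+1)) * ((1+r^2) ^ (μ+1))⁻¹ := by
        rw [hz1]; field_simp
    _ ≤ 2 / (1+r^2) ^ (μ+1) + (1 - x/4) * (2 * zTail (2*μ+1)) := by
        apply add_le_add_right
        rw [mul_comm]
        apply mul_le_mul_of_nonneg_right hinv (by positivity)
    _ ≤ mathieuS μ r := hX

-- E2 : universal bound  e3² (μ+1) ≤ (8/5)(1-e3)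
lemma E2 {μ : ℝ} (hμ : 0 < μ) :
    (zTail (2*μ+3))^2 * (μ+1) ≤ (8/5) * (1 - zTail (2*μ+3)) := by
  have h14 : zTail (2*μ+3) ≤ 1/4 := zTail_le_quarter (by linarith)
  have h0 : 0 ≤ zTail (2*μ+3) := zTail_nonneg
  rcases le_or_gt μ 1 with hμ1 | hμ1
  · nlinarith
  · have hp : zTail (2*μ+3) ≤ (4/3) * (2:ℝ)^(-(2*μ+3)) := zTail_le_pow (by linarith)
    set T : ℝ := (2:ℝ)^(2*μ+3) with hT
    have hTpos : 0 < T := Real.rpow_pos_of_pos (by norm_num) _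
    have hTinv : (2:ℝ)^(-(2*μ+3)) = T⁻¹ := by
      rw [hT, Real.rpow_neg (by norm_num)]
    have hT32 : (32:ℝ) ≤ T := by
      have h5 : (2:ℝ)^((5:ℕ):ℝ) ≤ (2:ℝ)^(2*μ+3) :=
        Real.rpow_le_rpow_of_exponent_le (by norm_num) (by push_cast; linarith)
      rw [Real.rpow_natCast] at h5
      norm_num at h5
      exact h5
    have hTgrow : 1 + (2*μ+3)*(2/3) ≤ T := twopow_growth (by linarith)
    have heT : zTail (2*μ+3) * T ≤ 4/3 := by
      have := mul_le_mul_of_nonneg_right hp (le_of_lt hTpos)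
      rw [hTinv] at this
      calc zTail (2*μ+3) * T ≤ (4/3) * T⁻¹ * T := this
        _ = 4/3 := by field_simp
    -- (zTail)² (μ+1) T² ≤ (16/9)(μ+1) ≤ (6/5) T²
    have hsq : (zTail (2*μ+3))^2 * T^2 ≤ 16/9 := by nlinarith [heT, mul_nonneg h0 (le_of_lt hTpos)]
    have hT2 : (16/9) * (μ+1) ≤ (6/5) * T^2 := by nlinarith
    have hfin : (zTail (2*μ+3))^2 * (μ+1) ≤ 6/5 := by
      have step : (zTail (2*μ+3))^2 * (μ+1) * T^2 ≤ (6/5) * T^2 := by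
        calc (zTail (2*μ+3))^2 * (μ+1) * T^2 = ((zTail (2*μ+3))^2 * T^2) * (μ+1) := by ring
          _ ≤ (16/9) * (μ+1) := by nlinarith
          _ ≤ (6/5) * T^2 := hT2
      exact le_of_mul_le_mul_right step (by positivity)
    nlinarith

-- the quadratic lemma : given D ≥ 1, 4(1-e)(D-1) ≥ e², then D(1+es) ≥ 2s-(1-e)s²
lemma quad {D e s : ℝ} (hs : 1 ≤ s) (he0 : 0 ≤ e) (he : e ≤ 1/4) (hD : 1 ≤ D)
    (hkey : e^2 ≤ 4*(1-e)*(D-1)) : 2*s - (1-e)*s^2 ≤ D*(1+e*s) := by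
  nlinarith [sq_nonneg (2*(1-e)*s - (2-e)), mul_nonneg (mul_nonneg he0 (by linarith : (0:ℝ) ≤ s)) (by linarith : (0:ℝ) ≤ D - 1)]

theorem stmt6 (r μ : ℝ) (hr : 0 < r) (hμ : 0 < μ) :
    (mathieuS μ r / zetaR (2 * μ + 1)) ^ (1 / (μ + 1)) +
      zetaR (2 * μ + 3) * mathieuS μ r / (zetaR (2 * μ + 1) * mathieuS (μ + 1) r) ≥ 2 := by
  have hμ1 : (0:ℝ) < μ + 1 := by linarith
  set γ : ℝ := 1/(μ+1) with hγdef
  have hγ0 : 0 < γ := by positivity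
  set s : ℝ := 1 + r^2 with hsdef
  have hs1 : 1 < s := by simp only [hsdef]; nlinarith [sq_nonneg r]
  have hs0 : (0:ℝ) < s := by linarith
  set e : ℝ := zTail (2*μ+3) with hedef
  have he0 : 0 ≤ e := zTail_nonneg
  have he14 : e ≤ 1/4 := zTail_le_quarter (by linarith)
  have hz3 : zetaR (2*μ+3) = 1 + e := zetaR_split (by linarith)
  have hz1s : zetaR (2*μ+1) = 1 + zTail (2*μ+1) := zetaR_split (by linarith)
  have hz1ge : 1 ≤ zetaR (2*μ+1) := by
    have := zTail_nonneg (q := 2*μ+1); linarith [hz1s]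
  have hz1pos : 0 < zetaR (2*μ+1) := by linarith
  have hP : (0:ℝ) < s ^ (μ+1) := Real.rpow_pos_of_pos hs0 _
  have hX : 2 / s ^ (μ+1) ≤ mathieuS μ r := first_term hμ hr
  have hXpos : 0 < mathieuS μ r := lt_of_lt_of_le (by positivity) hX
  have hYpos : 0 < mathieuS (μ+1) r := by
    have h := first_term (μ := μ+1) (r := r) (by linarith) hr
    have : (0:ℝ) < 2 / s ^ ((μ+1)+1) := by positivity
    linarith
  have h1es : (0:ℝ) < 1 + e*s := by nlinarith
  -- B bound
  have hB : (1+e)*s/(1+e*s) ≤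
      zetaR (2 * μ + 3) * mathieuS μ r / (zetaR (2 * μ + 1) * mathieuS (μ + 1) r) := by
    have hchain : zetaR (2*μ+1) * mathieuS (μ+1) r ≤ mathieuS μ r * ((1+e*s)/s) := by
      have h1 := cheb hμ hr
      have h2 := Tbound hμ hr
      have h3 : mathieuS μ r * (∑' n : ℕ, ((n:ℝ)+1) ^ (-(2*μ+1)) * ((((n:ℝ)+1)^2 + r^2)⁻¹))
          ≤ mathieuS μ r * ((1+r^2)⁻¹ + e) := by
        apply mul_le_mul_of_nonneg_left h2 (le_of_lt hXpos)
      have h4 : (1+r^2)⁻¹ + e = (1+e*s)/s := by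
        rw [hsdef]; field_simp
      rw [h4] at h3
      linarith
    have hpos2 : 0 < zetaR (2*μ+1) * mathieuS (μ+1) r := mul_pos hz1pos hYpos
    have hpos3 : 0 < mathieuS μ r * ((1+e*s)/s) := by positivity
    rw [hz3]
    calc (1+e)*s/(1+e*s) = (1+e) * mathieuS μ r / (mathieuS μ r * ((1+e*s)/s)) := by
          field_simp
      _ ≤ (1+e) * mathieuS μ r / (zetaR (2*μ+1) * mathieuS (μ+1) r) := by
          apply div_le_div_of_nonneg_left (by positivity) hpos2 hchain
  -- A is nonneg
  have hA0 : 0 ≤ (mathieuS μ r / zetaR (2 * μ + 1)) ^ (1 / (μ + 1)) :=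
    Real.rpow_nonneg (by positivity) _
  -- glue lemma for cases 1 and 2
  have glue : ∀ D : ℝ, (8/5:ℝ)^γ ≤ D →
      D/s ≤ (mathieuS μ r / zetaR (2 * μ + 1)) ^ (1 / (μ + 1)) →
      2 ≤ (mathieuS μ r / zetaR (2 * μ + 1)) ^ (1 / (μ + 1)) +
        zetaR (2 * μ + 3) * mathieuS μ r / (zetaR (2 * μ + 1) * mathieuS (μ + 1) r) := by
    intro D hD85 hDA
    have hD1 : 1 + γ*(2/5) ≤ (8/5:ℝ)^γ := by
      have := rpow_lb (by norm_num : (0:ℝ) < 8/5) log_85 (le_of_lt hγ0)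
      linarith
    have hDge : 1 + γ*(2/5) ≤ D := le_trans hD1 hD85
    have hD1' : 1 ≤ D := by nlinarith
    have hμγ : (μ+1)*γ = 1 := by
      rw [hγdef]; field_simp
    have hkey : e^2 ≤ 4*(1-e)*(D-1) := by
      have h2 := E2 hμ
      rw [← hedef] at h2
      -- e²(μ+1) ≤ (8/5)(1-e),  D-1 ≥ (2/5)γ
      have h5 : (8/5)*(1-e)*γ ≤ 4*(1-e)*(D-1) := by
        have hγ25 : γ*(2/5) ≤ D - 1 := by linarith
        nlinarith [he14, hγ0]
      have h6 : e^2 = e^2*(μ+1)*γ := by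
        rw [mul_assoc, hμγ, mul_one]
      rw [h6]
      calc e^2*(μ+1)*γ ≤ (8/5)*(1-e)*γ := by
            apply mul_le_mul_of_nonneg_right h2 (le_of_lt hγ0)
        _ ≤ 4*(1-e)*(D-1) := h5
    have hquad := quad (le_of_lt hs1) he0 he14 hD1' hkey
    have hfinal : 2 ≤ D/s + (1+e)*s/(1+e*s) := by
      rw [div_add_div _ _ (ne_of_gt hs0) (ne_of_gt h1es), le_div_iff₀ (by positivity)]
      nlinarith
    calc (2:ℝ) ≤ D/s + (1+e)*s/(1+e*s) := hfinal
      _ ≤ _ := add_le_add hDA hB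
  rw [ge_iff_le]
  rcases le_or_gt ((μ+1)*r^2) 3 with hx3 | hx3
  · -- case 1
    apply glue (2^γ)
    · exact Real.rpow_le_rpow (by norm_num) (by norm_num) (le_of_lt hγ0)
    · have hXz : 2 / s ^ (μ+1) ≤ mathieuS μ r / zetaR (2*μ+1) := by
        have h := A3 hμ hr hx3
        rw [← hsdef] at h
        rw [le_div_iff₀ hz1pos]
        calc 2 / s ^ (μ+1) * zetaR (2*μ+1) = 2 * zetaR (2*μ+1) / s ^ (μ+1) := by ring
          _ ≤ mathieuS μ r := h
      have hrw : (2 / s ^ (μ+1)) ^ γ = 2^γ / s := by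
        rw [Real.div_rpow (by norm_num) (le_of_lt hP)]
        congr 1
        rw [← Real.rpow_mul (le_of_lt hs0)]
        rw [hγdef, mul_one_div, div_self (ne_of_gt hμ1), Real.rpow_one]
      calc 2^γ/s = (2 / s ^ (μ+1)) ^ γ := hrw.symm
        _ ≤ (mathieuS μ r / zetaR (2*μ+1)) ^ γ :=
            Real.rpow_le_rpow (by positivity) hXz (le_of_lt hγ0)
        _ = (mathieuS μ r / zetaR (2 * μ + 1)) ^ (1 / (μ + 1)) := by rw [hγdef]
  · rcases le_or_gt 1 μ with hμge | hμlt
    · -- case 2 : μ ≥ 1, use first term with z1 ≤ 5/4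
      have hz1q : zetaR (2*μ+1) ≤ 5/4 := by
        have := zTail_le_quarter (q := 2*μ+1) (by linarith)
        linarith [hz1s]
      apply glue ((2/zetaR (2*μ+1))^γ)
      · apply Real.rpow_le_rpow (by norm_num) _ (le_of_lt hγ0)
        rw [le_div_iff₀ hz1pos]; linarith
      · have hXz : (2/zetaR (2*μ+1)) / s ^ (μ+1) ≤ mathieuS μ r / zetaR (2*μ+1) := by
          have h12 : (2 / s^(μ+1)) / zetaR (2*μ+1) ≤ mathieuS μ r / zetaR (2*μ+1) := by
            gcongr
          rw [div_right_comm] at h12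
          exact h12
        have hrw : ((2/zetaR (2*μ+1)) / s ^ (μ+1)) ^ γ = (2/zetaR (2*μ+1))^γ / s := by
          rw [Real.div_rpow (by positivity) (le_of_lt hP)]
          congr 1
          rw [← Real.rpow_mul (le_of_lt hs0)]
          rw [hγdef, mul_one_div, div_self (ne_of_gt hμ1), Real.rpow_one]
        calc (2/zetaR (2*μ+1))^γ/s = ((2/zetaR (2*μ+1)) / s ^ (μ+1)) ^ γ := hrw.symm
          _ ≤ (mathieuS μ r / zetaR (2*μ+1)) ^ γ :=
              Real.rpow_le_rpow (by positivity) hXz (le_of_lt hγ0)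
          _ = (mathieuS μ r / zetaR (2 * μ + 1)) ^ (1 / (μ + 1)) := by rw [hγdef]
    · -- case 3 : μ < 1 and (μ+1) r² > 3 : B alone ≥ 2
      have hscond : (μ+4)/(μ+1) < s := by
        rw [div_lt_iff₀ hμ1, hsdef]
        nlinarith
      have hecond : e ≤ (2-μ)/(μ+4) := by
        rcases le_or_gt μ (4/5) with hμ45 | hμ45
        · calc e ≤ 1/4 := he14
            _ ≤ (2-μ)/(μ+4) := by
              rw [le_div_iff₀ (by linarith)]; linarith
        · have h13 : e ≤ 13/144 := zTail_le_13_144 (by linarith)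
          calc e ≤ 13/144 := h13
            _ ≤ (2-μ)/(μ+4) := by
              rw [le_div_iff₀ (by linarith)]; nlinarith
      have h8 : e*(μ+4) ≤ 2-μ := (le_div_iff₀ (by linarith : (0:ℝ) < μ+4)).1 hecond
      have h9 : (0:ℝ) < 1 - e := by linarith
      have hse : 2 ≤ s * (1-e) := by
        have h7 : 2*(μ+1) ≤ (μ+4)*(1-e) := by nlinarith
        have h10 : (μ+4)/(μ+1)*(1-e) ≤ s*(1-e) :=
          mul_le_mul_of_nonneg_right (le_of_lt hscond) (le_of_lt h9)
        have h11 : 2 ≤ (μ+4)/(μ+1)*(1-e) := by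
          rw [div_mul_eq_mul_div, le_div_iff₀ hμ1]; nlinarith
        exact le_trans h11 h10
      have hB2 : 2 ≤ (1+e)*s/(1+e*s) := by
        rw [le_div_iff₀ h1es]; nlinarith
      calc (2:ℝ) ≤ (1+e)*s/(1+e*s) := hB2
        _ ≤ zetaR (2 * μ + 3) * mathieuS μ r / (zetaR (2 * μ + 1) * mathieuS (μ + 1) r) := hB
        _ ≤ _ := le_add_of_nonneg_left hA0
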